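/- For every real b ≥ 1 and every δ ∈ (0,1), Γ(b+δ)/Γ(b) ≥ b^δ · Γ(1+δ). Consequently, for any C > 0 and θ > 0, the moment M_b = exp(−Cθ^δ · Γ(b+δ)/(Γ(1+δ)Γ(b))) of the conditional success probability in a Poisson bipolar network with p = 1 satisfies M_b ≤ M₁^{b^δ}, where M₁ = exp(−Cθ^δ); equivalently M_b(θ) ≤ M₁(bθ) for b ≥ 1. -/

import Mathlib

open Real MeasureTheory

/-- The real Beta integral identity. -/
lemma aux_beta_eq {b d : ℝ} (hb : 0 < b) (hd : 0 < d) :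
    Real.Gamma b * Real.Gamma d =
      Real.Gamma (b + d) * ∫ x in (0:ℝ)..1, x ^ (b-1) * (1-x) ^ (d-1) := by
  have h := Complex.Gamma_mul_Gamma_eq_betaIntegral
    (s := (b:ℂ)) (t := (d:ℂ)) (by simpa using hb) (by simpa using hd)
  have hI : Complex.betaIntegral (b:ℂ) (d:ℂ)
      = ((∫ x in (0:ℝ)..1, x ^ (b-1) * (1-x) ^ (d-1) : ℝ) : ℂ) := by
    rw [Complex.betaIntegral, ← intervalIntegral.integral_ofReal]
    refine intervalIntegral.integral_congr_ae (Filter.Eventually.of_forall fun x hx => ?_)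
    rw [Set.uIoc_of_le (zero_le_one), Set.mem_Ioc] at hx
    rw [Complex.ofReal_mul, Complex.ofReal_cpow hx.1.le,
      Complex.ofReal_cpow (by linarith [hx.2] : (0:ℝ) ≤ 1 - x)]
    push_cast
    ring
  rw [hI, Complex.Gamma_ofReal, Complex.Gamma_ofReal, ← Complex.ofReal_add,
    Complex.Gamma_ofReal] at h
  exact_mod_cast h

/-- Integrability from a nonnegative bound by an interval-integrable function. -/
lemma aux_int_of_bound {f h : ℝ → ℝ} (hm : Measurable f)
    (hh : IntervalIntegrable h volume 0 1)
    (hbd : ∀ x ∈ Set.Ioc (0:ℝ) 1, 0 ≤ f x ∧ f x ≤ h x) :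
    IntervalIntegrable f volume 0 1 := by
  rw [intervalIntegrable_iff, Set.uIoc_of_le zero_le_one] at hh ⊢
  refine MeasureTheory.Integrable.mono hh hm.aestronglyMeasurable.restrict ?_
  filter_upwards [ae_restrict_mem measurableSet_Ioc] with x hx
  obtain ⟨h0, h1⟩ := hbd x hx
  rw [Real.norm_eq_abs, Real.norm_eq_abs, abs_of_nonneg h0]
  exact h1.trans (le_abs_self _)

/-- Gautschi-type lower bound for the Gamma ratio. -/
lemma aux_gautschi {b d : ℝ} (hb : 1 ≤ b) (hd0 : 0 < d) (hd1 : d < 1) :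
    b ^ d * Real.Gamma (1 + d) ≤ Real.Gamma (b + d) / Real.Gamma b := by
  have hb0 : (0:ℝ) < b := lt_of_lt_of_le zero_lt_one hb
  set f : ℝ → ℝ := fun x => x ^ (b-1) * (1-x) ^ (d-1) with hf_def
  set g : ℝ → ℝ := fun x => x ^ (b-1) * (1-x^b) ^ (d-1) with hg_def
  set h : ℝ → ℝ := fun x => b ^ (1-d) * (1-x) ^ (d-1) with hh_def
  -- Bernoulli: 1 - x^b ≤ b*(1-x) on [0,1]
  have key1 : ∀ x : ℝ, 0 ≤ x → 1 - x ^ b ≤ b * (1-x) := by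
    intro x hx
    have := one_add_mul_self_le_rpow_one_add (s := x - 1) (by linarith) hb
    have hx' : (1 : ℝ) + (x - 1) = x := by ring
    rw [hx'] at this
    nlinarith
  -- x^b ≤ 1 and 1 - x^b > 0 for x ∈ [0,1)
  have hxb_lt : ∀ x : ℝ, 0 ≤ x → x < 1 → (0:ℝ) < 1 - x ^ b := by
    intro x hx hx1
    rcases eq_or_lt_of_le hx with rfl | hx0
    · rw [Real.zero_rpow hb0.ne']; norm_num
    · have := Real.rpow_lt_one hx hx1 hb0
      linarith
  have hone_le : (1:ℝ) ≤ b ^ (1-d) := Real.one_le_rpow hb (by linarith)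
  -- key pointwise bound (1-x)^(d-1) ≤ b^(1-d) * (1-x^b)^(d-1) for x ∈ [0,1)
  have key2 : ∀ x : ℝ, 0 ≤ x → x < 1 →
      (1-x) ^ (d-1) ≤ b ^ (1-d) * (1-x^b) ^ (d-1) := by
    intro x hx hx1
    have h1 : (0:ℝ) < 1 - x ^ b := hxb_lt x hx hx1
    have h2 := Real.rpow_le_rpow_of_nonpos h1 (key1 x hx) (by linarith : d - 1 ≤ 0)
    rw [Real.mul_rpow hb0.le (by linarith : (0:ℝ) ≤ 1 - x)] at h2
    calc (1-x) ^ (d-1) = b ^ (1-d) * (b ^ (d-1) * (1-x) ^ (d-1)) := by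
          rw [← mul_assoc, ← Real.rpow_add hb0]
          norm_num
      _ ≤ b ^ (1-d) * (1-x^b) ^ (d-1) :=
          mul_le_mul_of_nonneg_left h2 (by positivity)
  -- integrability of h
  have hh_int : IntervalIntegrable h volume 0 1 := by
    have h1 : IntervalIntegrable (fun x : ℝ => x ^ (d-1)) volume 1 0 :=
      intervalIntegral.intervalIntegrable_rpow' (by linarith)
    have h2 := (h1.comp_sub_left 1)
    simpa [hh_def] using h2.const_mul (b ^ (1-d))
  -- measurability
  have hmf : Measurable f :=
    (measurable_id.pow_const (b-1)).mul ((measurable_const.sub measurable_id).pow_const (d-1))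
  have hmg : Measurable g :=
    (measurable_id.pow_const (b-1)).mul
      ((measurable_const.sub (measurable_id.pow_const b)).pow_const (d-1))
  -- pointwise bounds on Ioc
  have hbnd_f : ∀ x ∈ Set.Ioc (0:ℝ) 1, 0 ≤ f x ∧ f x ≤ h x := by
    intro x hx
    have hx0 : (0:ℝ) ≤ x := hx.1.le
    have hx1 : x ≤ 1 := hx.2
    have hxp : (0:ℝ) ≤ x ^ (b-1) := Real.rpow_nonneg hx0 _
    have h1x : (0:ℝ) ≤ 1 - x := by linarith
    have h1p : (0:ℝ) ≤ (1-x) ^ (d-1) := Real.rpow_nonneg h1x _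
    constructor
    · exact mul_nonneg hxp h1p
    · have hle1 : x ^ (b-1) ≤ 1 := Real.rpow_le_one hx0 hx1 (by linarith)
      calc f x ≤ 1 * (1-x) ^ (d-1) := mul_le_mul_of_nonneg_right hle1 h1p
        _ = (1-x) ^ (d-1) := one_mul _
        _ ≤ h x := le_mul_of_one_le_left h1p hone_le
  have hbnd_g : ∀ x ∈ Set.Ioc (0:ℝ) 1, 0 ≤ g x ∧ g x ≤ h x := by
    intro x hx
    have hx0 : (0:ℝ) ≤ x := hx.1.le
    have hx1 : x ≤ 1 := hx.2
    have hxp : (0:ℝ) ≤ x ^ (b-1) := Real.rpow_nonneg hx0 _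
    have hxb1 : x ^ b ≤ 1 := Real.rpow_le_one hx0 hx1 hb0.le
    have h1xb : (0:ℝ) ≤ 1 - x ^ b := by linarith
    have h1p : (0:ℝ) ≤ (1-x^b) ^ (d-1) := Real.rpow_nonneg h1xb _
    constructor
    · exact mul_nonneg hxp h1p
    · have hle1 : x ^ (b-1) ≤ 1 := Real.rpow_le_one hx0 hx1 (by linarith)
      have hxbx : x ^ b ≤ x := by
        calc x ^ b ≤ x ^ (1:ℝ) := Real.rpow_le_rpow_of_exponent_ge' hx0 hx1 zero_le_one hb
          _ = x := Real.rpow_one x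
      have hcmp : (1-x^b) ^ (d-1) ≤ (1-x) ^ (d-1) := by
        rcases eq_or_lt_of_le hx1 with rfl | hx1'
        · have : (1:ℝ) - 1 ^ b = 0 := by rw [Real.one_rpow]; ring
          rw [this, sub_self, Real.zero_rpow (by linarith : d - 1 ≠ 0)]
        · exact Real.rpow_le_rpow_of_nonpos (by linarith) (by linarith) (by linarith)
      calc g x ≤ 1 * (1-x) ^ (d-1) :=
            mul_le_mul hle1 hcmp h1p zero_le_one
        _ = (1-x) ^ (d-1) := one_mul _
        _ ≤ h x := le_mul_of_one_le_left (Real.rpow_nonneg (by linarith) _) hone_le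
  have hf_int : IntervalIntegrable f volume 0 1 := aux_int_of_bound hmf hh_int hbnd_f
  have hg_int : IntervalIntegrable g volume 0 1 := aux_int_of_bound hmg hh_int hbnd_g
  -- monotone comparison of integrals
  have hmono : (∫ x in (0:ℝ)..1, f x) ≤ ∫ x in (0:ℝ)..1, b ^ (1-d) * g x := by
    apply intervalIntegral.integral_mono_on zero_le_one hf_int (hg_int.const_mul _)
    intro x hx
    have hx0 : (0:ℝ) ≤ x := hx.1
    have hx1 : x ≤ 1 := hx.2
    rcases eq_or_lt_of_le hx1 with rfl | hx1'
    · have h0 : ((1:ℝ)-1) ^ (d-1) = 0 := by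
        rw [sub_self, Real.zero_rpow (by linarith : d - 1 ≠ 0)]
      have h0' : ((1:ℝ)-1^b) ^ (d-1) = 0 := by
        rw [Real.one_rpow, sub_self, Real.zero_rpow (by linarith : d - 1 ≠ 0)]
      simp only [hf_def, hg_def, h0, h0', mul_zero]
      exact le_rfl
    · have hxp : (0:ℝ) ≤ x ^ (b-1) := Real.rpow_nonneg hx0 _
      have := mul_le_mul_of_nonneg_left (key2 x hx0 hx1') hxp
      calc f x ≤ x ^ (b-1) * (b ^ (1-d) * (1-x^b) ^ (d-1)) := this
        _ = b ^ (1-d) * g x := by ring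
  -- exact value of ∫ g
  have hexact : (∫ x in (0:ℝ)..1, g x) = 1 / (b * d) := by
    set F : ℝ → ℝ := fun x => -((1-x^b) ^ d / (b * d)) with hF_def
    have hderiv : ∀ x ∈ Set.Ioo (0:ℝ) 1, HasDerivWithinAt F (g x) (Set.Ioi x) x := by
      intro x hx
      have hx0 : (0:ℝ) < x := hx.1
      have hxb : (0:ℝ) < 1 - x ^ b := hxb_lt x hx0.le hx.2
      have h1 : HasDerivAt (fun y : ℝ => y ^ b) (b * x ^ (b-1)) x :=
        Real.hasDerivAt_rpow_const (Or.inl hx0.ne')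
      have h2 : HasDerivAt (fun y : ℝ => 1 - y ^ b) (-(b * x ^ (b-1))) x := h1.const_sub 1
      have h3 : HasDerivAt (fun u : ℝ => u ^ d) (d * (1-x^b) ^ (d-1)) (1 - x ^ b) :=
        Real.hasDerivAt_rpow_const (Or.inl hxb.ne')
      have h4 := h3.comp x h2
      have h5 := (h4.div_const (b * d)).neg
      have heq : -(d * (1-x^b) ^ (d-1) * -(b * x ^ (b-1)) / (b * d)) = g x := by
        field_simp [hg_def]
        ring
      have h5' : HasDerivAt F (g x) x := by
        rw [← heq]
        exact h5
      exact h5'.hasDerivWithinAt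
    have hcont : ContinuousOn F (Set.Icc 0 1) := by
      have c1 : Continuous fun x : ℝ => x ^ b :=
        continuous_iff_continuousAt.2 fun x => Real.continuousAt_rpow_const _ _ (Or.inr hb0.le)
      have c2 : Continuous fun y : ℝ => y ^ d :=
        continuous_iff_continuousAt.2 fun y => Real.continuousAt_rpow_const _ _ (Or.inr hd0.le)
      have : Continuous F := by
        rw [hF_def]
        exact ((c2.comp (continuous_const.sub c1)).div_const _).neg
      exact this.continuousOn
    have := intervalIntegral.integral_eq_sub_of_hasDeriv_right_of_le zero_le_one hcont
      hderiv hg_int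
    rw [this, hF_def]
    simp only [Real.one_rpow, sub_self, Real.zero_rpow hd0.ne', Real.zero_rpow hb0.ne',
      sub_zero, Real.one_rpow, neg_zero, zero_div, zero_sub, neg_neg, one_div]
  -- conclude the integral bound
  have hIle : (∫ x in (0:ℝ)..1, f x) ≤ b ^ (-d) / d := by
    have : (∫ x in (0:ℝ)..1, b ^ (1-d) * g x) = b ^ (1-d) * (1 / (b * d)) := by
      rw [intervalIntegral.integral_const_mul, hexact]
    rw [this] at hmono
    have hb1d : b ^ (1-d) = b ^ (-d) * b := by
      rw [← Real.rpow_add_one hb0.ne' (-d)]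
      ring_nf
    calc (∫ x in (0:ℝ)..1, f x) ≤ b ^ (1-d) * (1 / (b * d)) := hmono
      _ = b ^ (-d) / d := by rw [hb1d]; field_simp
  -- combine with the Beta identity
  have hbeta := aux_beta_eq hb0 hd0
  have hΓb : (0:ℝ) < Real.Gamma b := Real.Gamma_pos_of_pos hb0
  have hΓd : (0:ℝ) < Real.Gamma d := Real.Gamma_pos_of_pos hd0
  have hΓbd : (0:ℝ) < Real.Gamma (b + d) := Real.Gamma_pos_of_pos (by linarith)
  have hI_pos : (0:ℝ) < ∫ x in (0:ℝ)..1, f x := by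
    have hEq : (∫ x in (0:ℝ)..1, f x) = Real.Gamma b * Real.Gamma d / Real.Gamma (b + d) := by
      rw [eq_div_iff hΓbd.ne', mul_comm]
      exact hbeta.symm
    rw [hEq]
    positivity
  have hratio : Real.Gamma (b + d) / Real.Gamma b
      = Real.Gamma d / ∫ x in (0:ℝ)..1, f x := by
    rw [div_eq_div_iff hΓb.ne' hI_pos.ne', ← hbeta]
    exact mul_comm _ _
  rw [hratio]
  have hrd : (0:ℝ) < b ^ (-d) / d := by positivity
  have step : Real.Gamma d / (b ^ (-d) / d) ≤ Real.Gamma d / ∫ x in (0:ℝ)..1, f x := by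
    gcongr
  refine le_trans (le_of_eq ?_) step
  rw [Real.rpow_neg hb0.le, add_comm, Real.Gamma_add_one hd0.ne']
  have hbd : (0:ℝ) < b ^ d := Real.rpow_pos_of_pos hb0 d
  field_simp

/-- For `b ≥ 1` and `δ ∈ (0,1)`: `Γ(b+δ)/Γ(b) ≥ b^δ Γ(1+δ)`. Consequently, for any
`C > 0` and `θ > 0`, the moment `M_b = exp(-Cθ^δ Γ(b+δ)/(Γ(1+δ)Γ(b)))` satisfies
`M_b ≤ M₁^(b^δ)` with `M₁ = exp(-Cθ^δ)`, equivalently `M_b(θ) ≤ M₁(bθ)`. -/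
theorem bipolar_moment_upper_bound (b δ : ℝ) (hb : 1 ≤ b) (hδ : δ ∈ Set.Ioo (0:ℝ) 1) :
    Real.Gamma (b + δ) / Real.Gamma b ≥ b ^ δ * Real.Gamma (1 + δ) ∧
    ∀ C θ : ℝ, 0 < C → 0 < θ →
      Real.exp (-(C * θ ^ δ * (Real.Gamma (b + δ) / (Real.Gamma (1 + δ) * Real.Gamma b)))) ≤
        Real.exp (-(C * θ ^ δ)) ^ (b ^ δ) ∧
      Real.exp (-(C * θ ^ δ * (Real.Gamma (b + δ) / (Real.Gamma (1 + δ) * Real.Gamma b)))) ≤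
        Real.exp (-(C * (b * θ) ^ δ)) := by
  obtain ⟨hδ0, hδ1⟩ := hδ
  have hb0 : (0:ℝ) < b := lt_of_lt_of_le zero_lt_one hb
  have part1 := aux_gautschi hb hδ0 hδ1
  refine ⟨part1, fun C θ hC hθ => ?_⟩
  have hΓ1d : (0:ℝ) < Real.Gamma (1 + δ) := Real.Gamma_pos_of_pos (by linarith)
  have hΓb : (0:ℝ) < Real.Gamma b := Real.Gamma_pos_of_pos hb0
  have key : b ^ δ ≤ Real.Gamma (b + δ) / (Real.Gamma (1 + δ) * Real.Gamma b) := by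
    rw [le_div_iff₀ (by positivity)]
    calc b ^ δ * (Real.Gamma (1 + δ) * Real.Gamma b)
        = (b ^ δ * Real.Gamma (1 + δ)) * Real.Gamma b := by ring
      _ ≤ (Real.Gamma (b + δ) / Real.Gamma b) * Real.Gamma b :=
          mul_le_mul_of_nonneg_right part1 hΓb.le
      _ = Real.Gamma (b + δ) := by field_simp
  have hmain : C * θ ^ δ * b ^ δ
      ≤ C * θ ^ δ * (Real.Gamma (b + δ) / (Real.Gamma (1 + δ) * Real.Gamma b)) := by
    have hpos : (0:ℝ) ≤ C * θ ^ δ := by positivity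
    exact mul_le_mul_of_nonneg_left key hpos
  constructor
  · rw [← Real.exp_mul, Real.exp_le_exp]
    nlinarith [hmain]
  · rw [Real.exp_le_exp, Real.mul_rpow hb0.le hθ.le]
    nlinarith [hmain]
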